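/- Let M be a set of interpretations. Suppose there are DL-Lite assertions φ and ψ such that (1) every J ∈ M satisfies φ or satisfies ψ, and (2) there are J_φ, J_ψ ∈ M with J_φ ⊭ φ and J_ψ ⊭ ψ. Then there is no DL-Lite_FR knowledge base K such that M = Mod(K). -/
import Mathlib


namespace DLLite

/-- The countably infinite domain of constants. -/
abbrev Δ : Type := ℕ
/-- Countably infinite set of concept names. -/
abbrev ConceptName : Type := ℕ
/-- Countably infinite set of role names. -/
abbrev RoleName : Type := ℕ

/-- An interpretation assigns a set of domain elements to each concept name
and a binary relation to each role name; constants are interpreted as themselves. -/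
structure Interp where
  concept : ConceptName → Set Δ
  role : RoleName → Set (Δ × Δ)

/-- Basic roles: `P` or `P⁻`. -/
inductive BasicRole where
  | pos (P : RoleName)
  | inv (P : RoleName)
deriving DecidableEq

def BasicRole.interp (R : BasicRole) (I : Interp) : Set (Δ × Δ) :=
  match R with
  | .pos P => I.role P
  | .inv P => {p | (p.2, p.1) ∈ I.role P}

/-- Basic concepts: `A` or `∃R`. -/
inductive BasicConcept where
  | atom (A : ConceptName)
  | ex (R : BasicRole)
deriving DecidableEq

def BasicConcept.interp (B : BasicConcept) (I : Interp) : Set Δ :=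
  match B with
  | .atom A => I.concept A
  | .ex R => {o | ∃ o', (o, o') ∈ R.interp I}

/-- DL-Lite_FR assertions: (negative) concept/role inclusions, functionality
assertions, and membership assertions. -/
inductive Assertion where
  | conceptIncl (B1 B2 : BasicConcept)
  | conceptDisj (B1 B2 : BasicConcept)
  | roleIncl (R1 R2 : BasicRole)
  | roleDisj (R1 R2 : BasicRole)
  | funct (R : BasicRole)
  | memberC (A : ConceptName) (a : Δ)
  | memberR (P : RoleName) (a b : Δ)
deriving DecidableEq

/-- Satisfaction of an assertion by an interpretation. -/
def Interp.sat (I : Interp) : Assertion → Prop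
  | .conceptIncl B1 B2 => B1.interp I ⊆ B2.interp I
  | .conceptDisj B1 B2 => B1.interp I ∩ B2.interp I = ∅
  | .roleIncl R1 R2 => R1.interp I ⊆ R2.interp I
  | .roleDisj R1 R2 => R1.interp I ∩ R2.interp I = ∅
  | .funct R => ∀ o o1 o2, (o, o1) ∈ R.interp I → (o, o2) ∈ R.interp I → o1 = o2
  | .memberC A a => a ∈ I.concept A
  | .memberR P a b => (a, b) ∈ I.role P

/-- TBox assertions: inclusion or functionality assertions. -/
def Assertion.isTBox : Assertion → Prop
  | .memberC _ _ => False
  | .memberR _ _ _ => False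
  | _ => True

/-- Membership (ABox) assertions. -/
def Assertion.isMembership : Assertion → Prop
  | .memberC _ _ => True
  | .memberR _ _ _ => True
  | _ => False

/-- The constants occurring in an assertion. -/
def Assertion.constants : Assertion → Set Δ
  | .memberC _ a => {a}
  | .memberR _ a b => {a, b}
  | _ => ∅

/-- A knowledge base: a finite set of assertions (TBox ∪ ABox). -/
abbrev KB := Finset Assertion

/-- The set of models of a KB. -/
def Mod (K : KB) : Set Interp := {I | ∀ a ∈ K, I.sat a}

/-- Interpretations falsifying at least one assertion of `K`. -/
def NonMod (K : KB) : Set Interp := {I | ∃ a ∈ K, ¬ I.sat a}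

/-- The constants occurring in a KB. -/
def KB.constants (K : KB) : Set Δ := ⋃ a ∈ K, Assertion.constants a

/-- Atoms: ground facts `A(o)` or `P(o,o')`. -/
inductive Atom where
  | c (A : ConceptName) (o : Δ)
  | r (P : RoleName) (o o' : Δ)
deriving DecidableEq

/-- The atom set of an interpretation. -/
def Interp.atoms (I : Interp) : Set Atom :=
  fun a => match a with
  | .c A o => o ∈ I.concept A
  | .r P o o' => (o, o') ∈ I.role P

/-- Concept or role names (symbols). -/
inductive SName where
  | c (A : ConceptName)
  | r (P : RoleName)
deriving DecidableEq

/-- Atom-based set distance: symmetric difference of atom sets. -/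
def distASub (I J : Interp) : Set Atom := symmDiff I.atoms J.atoms
/-- Atom-based cardinality distance. -/
noncomputable def distACard (I J : Interp) : ℕ∞ := (symmDiff I.atoms J.atoms).encard
/-- Symbol-based set distance: names interpreted differently. -/
def distSSub (I J : Interp) : Set SName :=
  fun n => match n with
  | .c A => I.concept A ≠ J.concept A
  | .r P => I.role P ≠ J.role P
/-- Symbol-based cardinality distance. -/
noncomputable def distSCard (I J : Interp) : ℕ∞ := (distSSub I J).encard

/-- Global expansion w.r.t. a distance. -/
def expGlobD {D : Type} [PartialOrder D] (dist : Interp → Interp → D)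
    (M N : Set Interp) : Set Interp :=
  {J | J ∈ N ∧ ∃ I ∈ M, ∀ I' ∈ M, ∀ J' ∈ N, ¬ dist I' J' < dist I J}

/-- Local expansion w.r.t. a distance. -/
def expLocD {D : Type} [PartialOrder D] (dist : Interp → Interp → D)
    (M N : Set Interp) : Set Interp :=
  {J | J ∈ N ∧ ∃ I ∈ M, ∀ J' ∈ N, ¬ dist I J' < dist I J}

inductive LocKind | glob | loc
inductive MeasKind | atoms | symbols
inductive OrdKind | subset | card

/-- The expansion operator on sets of interpretations for each of the
eight model-based semantics `X^y_z`. -/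
def expansionSet : LocKind → MeasKind → OrdKind → Set Interp → Set Interp → Set Interp
  | .glob, .atoms, .subset => expGlobD distASub
  | .glob, .atoms, .card => expGlobD distACard
  | .glob, .symbols, .subset => expGlobD distSSub
  | .glob, .symbols, .card => expGlobD distSCard
  | .loc, .atoms, .subset => expLocD distASub
  | .loc, .atoms, .card => expLocD distACard
  | .loc, .symbols, .subset => expLocD distSSub
  | .loc, .symbols, .card => expLocD distSCard

/-- KB expansion `K ⊕ N` under semantics `X^y_z`. -/
def expandKB (X : LocKind) (y : MeasKind) (z : OrdKind) (K N : KB) : Set Interp :=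
  expansionSet X y z (Mod K) (Mod N)

/-- KB contraction `K ⊖ N` under semantics `X^y_z`. -/
def contractKB (X : LocKind) (y : MeasKind) (z : OrdKind) (K N : KB) : Set Interp :=
  Mod K ∪ expansionSet X y z (Mod K) (NonMod N)

/-- Union of two interpretations. -/
def Interp.union (I1 I2 : Interp) : Interp :=
  ⟨fun A => I1.concept A ∪ I2.concept A, fun P => I1.role P ∪ I2.role P⟩

/-- The support set of an interpretation. -/
def Interp.support (I : Interp) : Set Δ :=
  (⋃ A, I.concept A) ∪ (⋃ P, {o | ∃ o', (o, o') ∈ I.role P ∨ (o', o) ∈ I.role P})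

/-- The image `I^f` of an interpretation under an (injective) map `f`. -/
def Interp.image (I : Interp) (f : Δ → Δ) : Interp :=
  ⟨fun A => f '' I.concept A, fun P => (fun p => (f p.1, f p.2)) '' I.role P⟩

/-- `h` is a homomorphism from `I` to `J`. -/
def IsHom (h : Δ → Δ) (I J : Interp) : Prop :=
  (∀ A, h '' I.concept A ⊆ J.concept A) ∧
  (∀ P o o', (o, o') ∈ I.role P → (h o, h o') ∈ J.role P)

end DLLite

namespace DLLite

/-! ### Auxiliary development: combining two models

Given two interpretations `I`, `J` and injections `e : Δ → Δ → Δ`,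
`g f : Δ → Δ` with pairwise disjoint ranges such that `e a a = a` for every
constant `a` in a fixed finite set `F` (and `g`, `f` avoid `F`), we build a
combined interpretation `mixI e g f I J` which satisfies every DL-Lite_FR
assertion (with constants in `F`) satisfied by both `I` and `J`, and
falsifies every assertion (with constants in `F`) falsified by `I` or by `J`. -/

/-- Combination of two concept extensions. -/
def mixS (e : Δ → Δ → Δ) (g f : Δ → Δ) (S T : Set Δ) : Set Δ :=
  {o | (∃ x ∈ S, ∃ y ∈ T, e x y = o) ∨ (∃ x ∈ S, g x = o) ∨ (∃ y ∈ T, f y = o)}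

/-- Combination of two role extensions. -/
def mixRel (e : Δ → Δ → Δ) (g f : Δ → Δ) (S T : Set (Δ × Δ)) : Set (Δ × Δ) :=
  {p | (∃ x x', (x, x') ∈ S ∧ ∃ y y', (y, y') ∈ T ∧ e x y = p.1 ∧ e x' y' = p.2)
     ∨ (∃ x x', (x, x') ∈ S ∧ g x = p.1 ∧ g x' = p.2)
     ∨ (∃ y y', (y, y') ∈ T ∧ f y = p.1 ∧ f y' = p.2)}

/-- The combined interpretation. -/
def mixI (e : Δ → Δ → Δ) (g f : Δ → Δ) (I J : Interp) : Interp :=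
  ⟨fun A => mixS e g f (I.concept A) (J.concept A),
   fun P => mixRel e g f (I.role P) (J.role P)⟩

lemma role_interp_mix (e : Δ → Δ → Δ) (g f : Δ → Δ) (I J : Interp) (R : BasicRole) :
    R.interp (mixI e g f I J) = mixRel e g f (R.interp I) (R.interp J) := by
  cases R with
  | pos P => rfl
  | inv P =>
    ext ⟨u, v⟩
    constructor
    · rintro (⟨x, x', hS, y, y', hT, h1, h2⟩ | ⟨x, x', hS, h1, h2⟩ | ⟨y, y', hT, h1, h2⟩)
      · exact Or.inl ⟨x', x, hS, y', y, hT, h2, h1⟩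
      · exact Or.inr (Or.inl ⟨x', x, hS, h2, h1⟩)
      · exact Or.inr (Or.inr ⟨y', y, hT, h2, h1⟩)
    · rintro (⟨x, x', hS, y, y', hT, h1, h2⟩ | ⟨x, x', hS, h1, h2⟩ | ⟨y, y', hT, h1, h2⟩)
      · exact Or.inl ⟨x', x, hS, y', y, hT, h2, h1⟩
      · exact Or.inr (Or.inl ⟨x', x, hS, h2, h1⟩)
      · exact Or.inr (Or.inr ⟨y', y, hT, h2, h1⟩)

lemma concept_interp_mix (e : Δ → Δ → Δ) (g f : Δ → Δ) (I J : Interp) (B : BasicConcept) :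
    B.interp (mixI e g f I J) = mixS e g f (B.interp I) (B.interp J) := by
  cases B with
  | atom A => rfl
  | ex R =>
    ext o
    simp only [BasicConcept.interp, Set.mem_setOf_eq, role_interp_mix]
    constructor
    · rintro ⟨o', (⟨x, x', hS, y, y', hT, h1, h2⟩ | ⟨x, x', hS, h1, h2⟩ | ⟨y, y', hT, h1, h2⟩)⟩
      · exact Or.inl ⟨x, ⟨x', hS⟩, y, ⟨y', hT⟩, h1⟩
      · exact Or.inr (Or.inl ⟨x, ⟨x', hS⟩, h1⟩)
      · exact Or.inr (Or.inr ⟨y, ⟨y', hT⟩, h1⟩)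
    · rintro (⟨x, ⟨x', hS⟩, y, ⟨y', hT⟩, h1⟩ | ⟨x, ⟨x', hS⟩, h1⟩ | ⟨y, ⟨y', hT⟩, h1⟩)
      · exact ⟨e x' y', Or.inl ⟨x, x', hS, y, y', hT, h1, rfl⟩⟩
      · refine ⟨g x', Or.inr (Or.inl ⟨x, x', hS, h1, ?_⟩)⟩; rfl
      · refine ⟨f y', Or.inr (Or.inr ⟨y, y', hT, h1, ?_⟩)⟩; rfl

section Mix

variable {e : Δ → Δ → Δ} {g f : Δ → Δ} {F : Set Δ}
variable (he : ∀ x y x' y', e x y = e x' y' → x = x' ∧ y = y')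
variable (hg : Function.Injective g) (hf : Function.Injective f)
variable (heg : ∀ x y z, e x y ≠ g z) (hef : ∀ x y z, e x y ≠ f z)
variable (hgf : ∀ x y, g x ≠ f y)
variable (hFe : ∀ a ∈ F, e a a = a)
variable (hFg : ∀ a ∈ F, ∀ x, g x ≠ a) (hFf : ∀ a ∈ F, ∀ x, f x ≠ a)

include he hFe in
lemma e_eq_const {a x y : Δ} (ha : a ∈ F) (h : e x y = a) : x = a ∧ y = a :=
  he x y a a (h.trans (hFe a ha).symm)

include he hg hf heg hef hgf hFe in
/-- The combined interpretation satisfies every assertion (with constants in `F`)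
satisfied by both components. -/
lemma sat_mix (I J : Interp) (α : Assertion) (hI : I.sat α) (hJ : J.sat α)
    (hc : α.constants ⊆ F) : (mixI e g f I J).sat α := by
  cases α with
  | conceptIncl B1 B2 =>
    simp only [Interp.sat, concept_interp_mix] at *
    rintro o (⟨x, hx, y, hy, h⟩ | ⟨x, hx, h⟩ | ⟨y, hy, h⟩)
    · exact Or.inl ⟨x, hI hx, y, hJ hy, h⟩
    · exact Or.inr (Or.inl ⟨x, hI hx, h⟩)
    · exact Or.inr (Or.inr ⟨y, hJ hy, h⟩)
  | conceptDisj B1 B2 =>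
    simp only [Interp.sat, concept_interp_mix, Set.eq_empty_iff_forall_notMem] at *
    rintro o ⟨(⟨x, hx, y, hy, h⟩ | ⟨x, hx, h⟩ | ⟨y, hy, h⟩),
              (⟨x', hx', y', hy', h'⟩ | ⟨x', hx', h'⟩ | ⟨y', hy', h'⟩)⟩
    · obtain ⟨rfl, -⟩ := he x y x' y' (h.trans h'.symm); exact hI x ⟨hx, hx'⟩
    · exact heg x y x' (h.trans h'.symm)
    · exact hef x y y' (h.trans h'.symm)
    · exact heg x' y' x (h'.trans h.symm)
    · obtain rfl := hg (h.trans h'.symm); exact hI x ⟨hx, hx'⟩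
    · exact hgf x y' (h.trans h'.symm)
    · exact hef x' y' y (h'.trans h.symm)
    · exact hgf x' y (h'.trans h.symm)
    · obtain rfl := hf (h.trans h'.symm); exact hJ y ⟨hy, hy'⟩
  | roleIncl R1 R2 =>
    simp only [Interp.sat, role_interp_mix] at *
    rintro ⟨u, v⟩ (⟨x, x', hS, y, y', hT, h1, h2⟩ | ⟨x, x', hS, h1, h2⟩ | ⟨y, y', hT, h1, h2⟩)
    · exact Or.inl ⟨x, x', hI hS, y, y', hJ hT, h1, h2⟩
    · exact Or.inr (Or.inl ⟨x, x', hI hS, h1, h2⟩)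
    · exact Or.inr (Or.inr ⟨y, y', hJ hT, h1, h2⟩)
  | roleDisj R1 R2 =>
    simp only [Interp.sat, role_interp_mix, Set.eq_empty_iff_forall_notMem] at *
    rintro ⟨u, v⟩ ⟨(⟨x, x', hS, y, y', hT, h1, h2⟩ | ⟨x, x', hS, h1, h2⟩ |
                    ⟨y, y', hT, h1, h2⟩),
                   (⟨a, a', hS', b, b', hT', h1', h2'⟩ | ⟨a, a', hS', h1', h2'⟩ |
                    ⟨b, b', hT', h1', h2'⟩)⟩
    · obtain ⟨rfl, -⟩ := he x y a b (h1.trans h1'.symm)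
      obtain ⟨rfl, -⟩ := he x' y' a' b' (h2.trans h2'.symm)
      exact hI (x, x') ⟨hS, hS'⟩
    · exact heg x y a (h1.trans h1'.symm)
    · exact hef x y b (h1.trans h1'.symm)
    · exact heg a b x (h1'.trans h1.symm)
    · obtain rfl := hg (h1.trans h1'.symm)
      obtain rfl := hg (h2.trans h2'.symm)
      exact hI (x, x') ⟨hS, hS'⟩
    · exact hgf x b (h1.trans h1'.symm)
    · exact hef a b y (h1'.trans h1.symm)
    · exact hgf a y (h1'.trans h1.symm)
    · obtain rfl := hf (h1.trans h1'.symm)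
      obtain rfl := hf (h2.trans h2'.symm)
      exact hJ (y, y') ⟨hT, hT'⟩
  | funct R =>
    simp only [Interp.sat, role_interp_mix] at *
    rintro o o1 o2 (⟨x, x', hS, y, y', hT, h1, h2⟩ | ⟨x, x', hS, h1, h2⟩ |
                    ⟨y, y', hT, h1, h2⟩)
                   (⟨a, a', hS', b, b', hT', h1', h2'⟩ | ⟨a, a', hS', h1', h2'⟩ |
                    ⟨b, b', hT', h1', h2'⟩)
    · obtain ⟨rfl, rfl⟩ := he x y a b (h1.trans h1'.symm)
      obtain rfl := hI x x' a' hS hS'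
      obtain rfl := hJ y y' b' hT hT'
      exact h2.symm.trans h2'
    · exact absurd (h1.trans h1'.symm) (heg x y a)
    · exact absurd (h1.trans h1'.symm) (hef x y b)
    · exact absurd (h1'.trans h1.symm) (heg a b x)
    · obtain rfl := hg (h1.trans h1'.symm)
      obtain rfl := hI x x' a' hS hS'
      exact h2.symm.trans h2'
    · exact absurd (h1.trans h1'.symm) (hgf x b)
    · exact absurd (h1'.trans h1.symm) (hef a b y)
    · exact absurd (h1'.trans h1.symm) (hgf a y)
    · obtain rfl := hf (h1.trans h1'.symm)
      obtain rfl := hJ y y' b' hT hT'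
      exact h2.symm.trans h2'
  | memberC A a =>
    have ha : a ∈ F := hc rfl
    exact Or.inl ⟨a, hI, a, hJ, hFe a ha⟩
  | memberR P a b =>
    have ha : a ∈ F := hc (show a ∈ ({a, b} : Set Δ) from Or.inl rfl)
    have hb : b ∈ F := hc (show b ∈ ({a, b} : Set Δ) from Or.inr rfl)
    exact Or.inl ⟨a, b, hI, a, b, hJ, hFe a ha, hFe b hb⟩

include he hg heg hgf hFe hFg hFf in
/-- The combined interpretation falsifies every assertion (with constants in `F`)
falsified by the left component. -/
lemma notsat_left (I J : Interp) (α : Assertion) (hI : ¬ I.sat α)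
    (hc : α.constants ⊆ F) : ¬ (mixI e g f I J).sat α := by
  cases α with
  | conceptIncl B1 B2 =>
    simp only [Interp.sat, Set.subset_def, not_forall] at hI
    obtain ⟨x, hx, hnx⟩ := hI
    intro hsat
    simp only [Interp.sat, concept_interp_mix] at hsat
    rcases hsat (Or.inr (Or.inl ⟨x, hx, rfl⟩)) with
      ⟨a, _, b, _, h⟩ | ⟨a, ha, h⟩ | ⟨b, _, h⟩
    · exact heg a b x h
    · exact hnx (hg h ▸ ha)
    · exact hgf x b h.symm
  | conceptDisj B1 B2 =>
    simp only [Interp.sat, Set.eq_empty_iff_forall_notMem, not_forall, not_not] at hI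
    obtain ⟨x, hx1, hx2⟩ := hI
    intro hsat
    simp only [Interp.sat, concept_interp_mix, Set.eq_empty_iff_forall_notMem] at hsat
    exact hsat (g x) ⟨Or.inr (Or.inl ⟨x, hx1, rfl⟩), Or.inr (Or.inl ⟨x, hx2, rfl⟩)⟩
  | roleIncl R1 R2 =>
    simp only [Interp.sat, Set.subset_def, not_forall] at hI
    obtain ⟨⟨x, x'⟩, hx, hnx⟩ := hI
    intro hsat
    simp only [Interp.sat, role_interp_mix] at hsat
    rcases @hsat (g x, g x') (Or.inr (Or.inl ⟨x, x', hx, rfl, rfl⟩)) with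
      ⟨a, a', _, b, b', _, h1, h2⟩ | ⟨a, a', ha, h1, h2⟩ | ⟨b, b', _, h1, h2⟩
    · exact heg a b x h1
    · obtain rfl := hg h1; obtain rfl := hg h2; exact hnx ha
    · exact hgf x b h1.symm
  | roleDisj R1 R2 =>
    simp only [Interp.sat, Set.eq_empty_iff_forall_notMem, not_forall, not_not] at hI
    obtain ⟨⟨x, x'⟩, hx1, hx2⟩ := hI
    intro hsat
    simp only [Interp.sat, role_interp_mix, Set.eq_empty_iff_forall_notMem] at hsat
    exact hsat (g x, g x')
      ⟨Or.inr (Or.inl ⟨x, x', hx1, rfl, rfl⟩), Or.inr (Or.inl ⟨x, x', hx2, rfl, rfl⟩)⟩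
  | funct R =>
    simp only [Interp.sat, not_forall] at hI
    obtain ⟨o, o1, o2, h1, h2, hne⟩ := hI
    intro hsat
    simp only [Interp.sat, role_interp_mix] at hsat
    have := hsat (g o) (g o1) (g o2)
      (Or.inr (Or.inl ⟨o, o1, h1, rfl, rfl⟩)) (Or.inr (Or.inl ⟨o, o2, h2, rfl, rfl⟩))
    exact hne (hg this)
  | memberC A a =>
    have ha : a ∈ F := hc rfl
    rintro (⟨x, hx, y, _, h⟩ | ⟨x, _, h⟩ | ⟨y, _, h⟩)
    · obtain ⟨rfl, -⟩ := e_eq_const he hFe ha h; exact hI hx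
    · exact hFg a ha x h
    · exact hFf a ha y h
  | memberR P a b =>
    have ha : a ∈ F := hc (show a ∈ ({a, b} : Set Δ) from Or.inl rfl)
    have hb : b ∈ F := hc (show b ∈ ({a, b} : Set Δ) from Or.inr rfl)
    rintro (⟨x, x', hS, y, y', _, h1, h2⟩ | ⟨x, x', _, h1, h2⟩ | ⟨y, y', _, h1, h2⟩)
    · obtain ⟨rfl, -⟩ := e_eq_const he hFe ha h1
      obtain ⟨rfl, -⟩ := e_eq_const he hFe hb h2
      exact hI hS
    · exact hFg a ha x h1
    · exact hFf a ha y h1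

include he hf hef hgf hFe hFg hFf in
/-- The combined interpretation falsifies every assertion (with constants in `F`)
falsified by the right component. -/
lemma notsat_right (I J : Interp) (α : Assertion) (hJ : ¬ J.sat α)
    (hc : α.constants ⊆ F) : ¬ (mixI e g f I J).sat α := by
  cases α with
  | conceptIncl B1 B2 =>
    simp only [Interp.sat, Set.subset_def, not_forall] at hJ
    obtain ⟨y, hy, hny⟩ := hJ
    intro hsat
    simp only [Interp.sat, concept_interp_mix] at hsat
    rcases hsat (Or.inr (Or.inr ⟨y, hy, rfl⟩)) with
      ⟨a, _, b, _, h⟩ | ⟨a, _, h⟩ | ⟨b, hb, h⟩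
    · exact hef a b y h
    · exact hgf a y h
    · exact hny (hf h ▸ hb)
  | conceptDisj B1 B2 =>
    simp only [Interp.sat, Set.eq_empty_iff_forall_notMem, not_forall, not_not] at hJ
    obtain ⟨y, hy1, hy2⟩ := hJ
    intro hsat
    simp only [Interp.sat, concept_interp_mix, Set.eq_empty_iff_forall_notMem] at hsat
    exact hsat (f y) ⟨Or.inr (Or.inr ⟨y, hy1, rfl⟩), Or.inr (Or.inr ⟨y, hy2, rfl⟩)⟩
  | roleIncl R1 R2 =>
    simp only [Interp.sat, Set.subset_def, not_forall] at hJ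
    obtain ⟨⟨y, y'⟩, hy, hny⟩ := hJ
    intro hsat
    simp only [Interp.sat, role_interp_mix] at hsat
    rcases @hsat (f y, f y') (Or.inr (Or.inr ⟨y, y', hy, rfl, rfl⟩)) with
      ⟨a, a', _, b, b', _, h1, h2⟩ | ⟨a, a', _, h1, h2⟩ | ⟨b, b', hb, h1, h2⟩
    · exact hef a b y h1
    · exact hgf a y h1
    · obtain rfl := hf h1; obtain rfl := hf h2; exact hny hb
  | roleDisj R1 R2 =>
    simp only [Interp.sat, Set.eq_empty_iff_forall_notMem, not_forall, not_not] at hJ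
    obtain ⟨⟨y, y'⟩, hy1, hy2⟩ := hJ
    intro hsat
    simp only [Interp.sat, role_interp_mix, Set.eq_empty_iff_forall_notMem] at hsat
    exact hsat (f y, f y')
      ⟨Or.inr (Or.inr ⟨y, y', hy1, rfl, rfl⟩), Or.inr (Or.inr ⟨y, y', hy2, rfl, rfl⟩)⟩
  | funct R =>
    simp only [Interp.sat, not_forall] at hJ
    obtain ⟨o, o1, o2, h1, h2, hne⟩ := hJ
    intro hsat
    simp only [Interp.sat, role_interp_mix] at hsat
    have := hsat (f o) (f o1) (f o2)
      (Or.inr (Or.inr ⟨o, o1, h1, rfl, rfl⟩)) (Or.inr (Or.inr ⟨o, o2, h2, rfl, rfl⟩))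
    exact hne (hf this)
  | memberC A a =>
    have ha : a ∈ F := hc rfl
    rintro (⟨x, _, y, hy, h⟩ | ⟨x, _, h⟩ | ⟨y, _, h⟩)
    · obtain ⟨-, rfl⟩ := e_eq_const he hFe ha h; exact hJ hy
    · exact hFg a ha x h
    · exact hFf a ha y h
  | memberR P a b =>
    have ha : a ∈ F := hc (show a ∈ ({a, b} : Set Δ) from Or.inl rfl)
    have hb : b ∈ F := hc (show b ∈ ({a, b} : Set Δ) from Or.inr rfl)
    rintro (⟨x, x', _, y, y', hT, h1, h2⟩ | ⟨x, x', _, h1, h2⟩ | ⟨y, y', _, h1, h2⟩)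
    · obtain ⟨-, rfl⟩ := e_eq_const he hFe ha h1
      obtain ⟨-, rfl⟩ := e_eq_const he hFe hb h2
      exact hJ hT
    · exact hFg a ha x h1
    · exact hFf a ha y h1

end Mix

/-- The pairing injection, fixing the diagonal over `F`. -/
noncomputable def eFun (F : Set ℕ) (N : ℕ) : ℕ → ℕ → ℕ := fun x y =>
  by classical exact if x = y ∧ x ∈ F then x else N + 3 * Nat.pair x y

/-- First copy injection. -/
def gFun (N : ℕ) : ℕ → ℕ := fun x => N + 3 * x + 1

/-- Second copy injection. -/
def fFun (N : ℕ) : ℕ → ℕ := fun x => N + 3 * x + 2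

section Funs

variable {F : Set ℕ} {N : ℕ} (hFN : ∀ a ∈ F, a < N)

lemma eFun_of_mem {a : ℕ} (ha : a ∈ F) : eFun F N a a = a := by
  simp only [eFun]
  rw [if_pos ⟨rfl, ha⟩]

include hFN in
lemma eFun_inj : ∀ x y x' y', eFun F N x y = eFun F N x' y' → x = x' ∧ y = y' := by
  intro x y x' y' h
  simp only [eFun] at h
  split_ifs at h with h1 h2 h2
  · exact ⟨h, h1.1 ▸ h2.1 ▸ h⟩
  · exact absurd h (by have := hFN x h1.2; omega)
  · exact absurd h (by have := hFN x' h2.2; omega)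
  · have : Nat.pair x y = Nat.pair x' y' := by omega
    exact Nat.pair_eq_pair.mp this

lemma gFun_inj : Function.Injective (gFun N) := by
  intro x y h; simp only [gFun] at h; omega

lemma fFun_inj : Function.Injective (fFun N) := by
  intro x y h; simp only [fFun] at h; omega

include hFN in
lemma eFun_ne_gFun : ∀ x y z, eFun F N x y ≠ gFun N z := by
  intro x y z h
  simp only [eFun, gFun] at h
  split_ifs at h with h1
  · have := hFN x h1.2; omega
  · omega

include hFN in
lemma eFun_ne_fFun : ∀ x y z, eFun F N x y ≠ fFun N z := by
  intro x y z h
  simp only [eFun, fFun] at h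
  split_ifs at h with h1
  · have := hFN x h1.2; omega
  · omega

lemma gFun_ne_fFun : ∀ x y, gFun N x ≠ fFun N y := by
  intro x y h; simp only [gFun, fFun] at h; omega

include hFN in
lemma gFun_ne_const : ∀ a ∈ F, ∀ x, gFun N x ≠ a := by
  intro a ha x h; have := hFN a ha; simp only [gFun] at h; omega

include hFN in
lemma fFun_ne_const : ∀ a ∈ F, ∀ x, fFun N x ≠ a := by
  intro a ha x h; have := hFN a ha; simp only [fFun] at h; omega

end Funs

lemma constants_finite (α : Assertion) : α.constants.Finite := by
  cases α with
  | memberC A a => exact Set.finite_singleton a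
  | memberR P a b => exact (Set.finite_singleton b).insert a
  | conceptIncl B1 B2 => exact Set.finite_empty
  | conceptDisj B1 B2 => exact Set.finite_empty
  | roleIncl R1 R2 => exact Set.finite_empty
  | roleDisj R1 R2 => exact Set.finite_empty
  | funct R => exact Set.finite_empty

/-- Theorem (no disjunction in DL-Lite_FR): if every interpretation of `M`
satisfies `φ` or `ψ`, but some member of `M` falsifies `φ` and some member
falsifies `ψ`, then `M` is not the set of models of any DL-Lite_FR KB. -/
theorem no_disjunction_dllite (M : Set Interp) (φ ψ : Assertion)
    (h1 : ∀ J ∈ M, J.sat φ ∨ J.sat ψ)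
    (h2 : ∃ Jφ ∈ M, ¬ Jφ.sat φ)
    (h3 : ∃ Jψ ∈ M, ¬ Jψ.sat ψ) :
    ¬ ∃ K : KB, M = Mod K := by
  classical
  rintro ⟨K, hMK⟩
  obtain ⟨Jφ, hJφM, hJφ⟩ := h2
  obtain ⟨Jψ, hJψM, hJψ⟩ := h3
  have hFfin : (KB.constants K ∪ φ.constants ∪ ψ.constants).Finite := by
    apply Set.Finite.union
    apply Set.Finite.union
    · exact Set.Finite.biUnion (Set.finite_mem_finset K) fun a _ => constants_finite a
    · exact constants_finite φ
    · exact constants_finite ψ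
  obtain ⟨b, hb⟩ := hFfin.bddAbove
  set F : Set Δ := KB.constants K ∪ φ.constants ∪ ψ.constants
  have hFN : ∀ a ∈ F, a < b + 1 := fun a ha => Nat.lt_succ_of_le (hb ha)
  set e : Δ → Δ → Δ := eFun F (b + 1)
  set g : Δ → Δ := gFun (b + 1)
  set f : Δ → Δ := fFun (b + 1)
  have he : ∀ x y x' y', e x y = e x' y' → x = x' ∧ y = y' := eFun_inj hFN
  have hg : Function.Injective g := gFun_inj
  have hf : Function.Injective f := fFun_inj
  have heg : ∀ x y z, e x y ≠ g z := eFun_ne_gFun hFN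
  have hef : ∀ x y z, e x y ≠ f z := eFun_ne_fFun hFN
  have hgf : ∀ x y, g x ≠ f y := gFun_ne_fFun
  have hFe : ∀ a ∈ F, e a a = a := fun a ha => eFun_of_mem ha
  have hFg : ∀ a ∈ F, ∀ x, g x ≠ a := gFun_ne_const hFN
  have hFf : ∀ a ∈ F, ∀ x, f x ≠ a := fFun_ne_const hFN
  have hModφ : Jφ ∈ Mod K := hMK ▸ hJφM
  have hModψ : Jψ ∈ Mod K := hMK ▸ hJψM
  have hH : mixI e g f Jφ Jψ ∈ Mod K := by
    intro α hα
    refine sat_mix he hg hf heg hef hgf hFe Jφ Jψ α (hModφ α hα) (hModψ α hα) ?_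
    calc α.constants ⊆ KB.constants K := Set.subset_biUnion_of_mem hα
      _ ⊆ F := Set.subset_union_left.trans Set.subset_union_left
  have hHM : mixI e g f Jφ Jψ ∈ M := by rw [hMK]; exact hH
  have hcφ : φ.constants ⊆ F := Set.subset_union_right.trans Set.subset_union_left
  have hcψ : ψ.constants ⊆ F := Set.subset_union_right
  rcases h1 _ hHM with hsat | hsat
  · exact notsat_left he hg heg hgf hFe hFg hFf Jφ Jψ φ hJφ hcφ hsat
  · exact notsat_right he hf hef hgf hFe hFg hFf Jφ Jψ ψ hJψ hcψ hsat

end DLLite
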